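/- Let γ : [0,1] → (0,1)^d be the length parameterisation of a line segment, 𝒫 a dense subset of Lip₁([0,1], ℝ), t₀ ∈ (0,1), f ∈ Lip₁([0,1]^d, ℝ^l) with Lip(f) < 1, ε ∈ (0,1), and j ∈ {1,…,l}. Then there exist p ∈ 𝒫, η > 0, and g = (g₁,…,g_l) ∈ Lip₁([0,1]^d, ℝ^l) such that ‖g(x) − f(x)‖ ≤ ε for all x, g_j ∘ γ agrees with p on (t₀ − η, t₀ + η), and if l = 1 then g₁ ∘ γ = p on all of [0,1]. -/

import Mathlib

open scoped BoundedContinuousFunction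

/-- The closed unit cube `[0,1]^d` in Euclidean space. -/
def unitCube (d : ℕ) : Set (EuclideanSpace ℝ (Fin d)) :=
  {x | ∀ i, x i ∈ Set.Icc (0 : ℝ) 1}

/-- The open unit cube `(0,1)^d` in Euclidean space. -/
def openCube (d : ℕ) : Set (EuclideanSpace ℝ (Fin d)) :=
  {x | ∀ i, x i ∈ Set.Ioo (0 : ℝ) 1}

lemma openCube_subset_unitCube (d : ℕ) : openCube d ⊆ unitCube d :=
  fun _ hx i => ⟨le_of_lt (hx i).1, le_of_lt (hx i).2⟩

/-- The space `Lip₁([0,1]^d, ℝ^l)` of `1`-Lipschitz maps into `ℝ^l`, with the sup metric. -/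
abbrev LipV (d l : ℕ) :=
  {f : ↥(unitCube d) →ᵇ EuclideanSpace ℝ (Fin l) // LipschitzWith 1 ⇑f}

/-- The space `Lip₁([0,1], ℝ)` of `1`-Lipschitz functions on `[0,1]`, sup metric. -/
abbrev Lip1I := {f : ↥(Set.Icc (0:ℝ) 1) →ᵇ ℝ // LipschitzWith 1 ⇑f}

namespace Stmt16Aux

/-- Key algebraic inequality. -/
lemma key_ineq (K₀ κ Q Δ : ℝ) (hK₀ : 0 ≤ K₀) (hK₁ : K₀ ≤ 1) (hκ : κ = Real.sqrt (1 - K₀^2))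
    (hQ : Q^2 ≤ Q*Δ) :
    K₀^2*(Δ - Q)^2 + (κ*Δ + (1-κ)*Q)^2 ≤ Δ^2 := by
  have h1 : (0:ℝ) ≤ 1 - K₀^2 := by nlinarith
  have hκsq : κ^2 = 1 - K₀^2 := by rw [hκ]; exact Real.sq_sqrt h1
  have hκ0 : 0 ≤ κ := by rw [hκ]; positivity
  have hκ1 : κ ≤ 1 := by nlinarith
  nlinarith [mul_nonneg (sub_nonneg.mpr hκ1) (sub_nonneg.mpr hQ)]

/-- 1-Lipschitz property of a two-sided clamp. -/
lemma clamp_lip (lo hi a b : ℝ) : |max lo (min hi a) - max lo (min hi b)| ≤ |a - b| := by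
  calc |max lo (min hi a) - max lo (min hi b)| ≤ max |lo - lo| |min hi a - min hi b| :=
        abs_max_sub_max_le_max _ _ _ _
    _ ≤ |a - b| := by
        simpa using (abs_min_sub_min_le_max hi a hi b).trans (by simp)

lemma clamp3_lip (lo1 lo2 hi1 hi2 r1 r2 : ℝ) (h1 : |lo1 - lo2| ≤ |hi1 - hi2|) :
    |max lo1 (min hi1 r1) - max lo2 (min hi2 r2)| ≤ max |hi1 - hi2| |r1 - r2| := by
  refine (abs_max_sub_max_le_max _ _ _ _).trans ?_
  refine max_le ?_ ((abs_min_sub_min_le_max _ _ _ _))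
  exact h1.trans (le_max_left _ _)

lemma tlip_arith (K₀ κ₃ χΔ ΦΔ uΔ wn : ℝ) (hκsq : κ₃^2 = 1 - K₀^2)
    (hkey : K₀^2*χΔ^2 + ΦΔ^2 ≤ uΔ^2) (hwn : 0 ≤ wn) :
    ΦΔ^2 + κ₃^2*wn + K₀^2*(χΔ^2 + wn) ≤ uΔ^2 + wn := by nlinarith

lemma close_arith (a b ε : ℝ) (ha : 0 ≤ a) (haε : a ≤ ε/4) (hb : 0 ≤ b) (hbε : b ≤ 3*ε/4)
    (hε : 0 ≤ ε) : a^2 + b^2 ≤ ε^2 := by nlinarith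

lemma chi_sq (Q Δ : ℝ) (hQ : Q^2 ≤ Q*Δ) : (Δ - Q)^2 ≤ Δ^2 := by nlinarith [sq_nonneg Q]

lemma clamp_eq_self (r lo hi : ℝ) (h1 : lo ≤ r) (h2 : r ≤ hi) : max lo (min hi r) = r := by
  rw [min_eq_right h2, max_eq_right h1]

/-- the clamp `q` has increments between `0` and the increment of the identity. -/
lemma q_sq (η t₀ : ℝ) (hη : 0 ≤ η) (a b : ℝ) :
    (max (-η) (min η (a - t₀)) - max (-η) (min η (b - t₀)))^2
      ≤ (max (-η) (min η (a - t₀)) - max (-η) (min η (b - t₀))) * (a - b) := by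
  have hlip := clamp_lip (-η) η (a - t₀) (b - t₀)
  have hmono : ∀ s t : ℝ, t ≤ s →
      max (-η) (min η (t - t₀)) ≤ max (-η) (min η (s - t₀)) := by
    intro s t hts
    exact max_le_max le_rfl (min_le_min le_rfl (by linarith))
  rcases le_total b a with hab | hab
  · have h1 := hmono a b hab
    have h2 : max (-η) (min η (a - t₀)) - max (-η) (min η (b - t₀)) ≤ a - b := by
      have : |(a - t₀) - (b - t₀)| = a - b := by rw [abs_of_nonneg] <;> [ring_nf; linarith]
      calc max (-η) (min η (a - t₀)) - max (-η) (min η (b - t₀))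
          ≤ |max (-η) (min η (a - t₀)) - max (-η) (min η (b - t₀))| := le_abs_self _
        _ ≤ a - b := by rw [← this]; simpa using hlip
    nlinarith
  · have h1 := hmono b a hab
    have h2 : max (-η) (min η (b - t₀)) - max (-η) (min η (a - t₀)) ≤ b - a := by
      have : |(a - t₀) - (b - t₀)| = b - a := by
        rw [show (a - t₀) - (b - t₀) = a - b by ring, abs_of_nonpos (by linarith)]; ring
      calc max (-η) (min η (b - t₀)) - max (-η) (min η (a - t₀))
          ≤ |max (-η) (min η (b - t₀)) - max (-η) (min η (a - t₀))| := le_abs_self _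
        _ = |max (-η) (min η (a - t₀)) - max (-η) (min η (b - t₀))| := abs_sub_comm _ _
        _ ≤ b - a := by rw [← this]; simpa using hlip
    nlinarith

/-- Pythagoras-type splitting. -/
lemma norm_sq_split {d : ℕ} (v z : EuclideanSpace ℝ (Fin d)) (hv : ‖v‖ = 1)
    (hz : inner ℝ v z = (0:ℝ)) (α : ℝ) : ‖α • v + z‖^2 = α^2 + ‖z‖^2 := by
  rw [norm_add_sq_real, norm_smul, real_inner_smul_left, hz]
  simp [hv, mul_pow]

lemma abs_coord_le_norm {l : ℕ} (z : EuclideanSpace ℝ (Fin l)) (j : Fin l) : |z j| ≤ ‖z‖ := by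
  have h2 : |z j|^2 ≤ ‖z‖^2 := by
    rw [PiLp.norm_sq_eq_of_L2]
    have := Finset.single_le_sum (f := fun i => ‖z i‖^2) (fun i _ => by positivity)
      (Finset.mem_univ j)
    simpa using this
  exact (pow_le_pow_iff_left₀ (abs_nonneg _) (norm_nonneg _) (by norm_num)).mp h2

lemma unitCube_compact (d : ℕ) : IsCompact (unitCube d) := by
  apply Metric.isCompact_of_isClosed_isBounded
  · have : unitCube d = ⋂ i, (fun x : EuclideanSpace ℝ (Fin d) => x i) ⁻¹' (Set.Icc 0 1) := by
      ext x; simp [unitCube, Set.mem_iInter]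
    rw [this]
    exact isClosed_iInter fun i =>
      (isClosed_Icc).preimage ((continuous_apply i).comp (PiLp.continuous_ofLp 2 _))
  · apply (Metric.isBounded_closedBall (x := (0:EuclideanSpace ℝ (Fin d)))
      (r := Real.sqrt d)).subset
    intro x hx
    rw [Metric.mem_closedBall, dist_zero_right]
    have hsq : ‖x‖^2 ≤ (d:ℝ) := by
      rw [PiLp.norm_sq_eq_of_L2]
      calc ∑ i, ‖x i‖^2 ≤ ∑ _i : Fin d, 1 := by
            refine Finset.sum_le_sum fun i _ => ?_
            have h1 := (hx i).1; have h2 := (hx i).2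
            rw [Real.norm_eq_abs, sq_abs]; nlinarith
        _ = d := by simp
    calc ‖x‖ = Real.sqrt (‖x‖^2) := (Real.sqrt_sq (norm_nonneg _)).symm
      _ ≤ Real.sqrt d := Real.sqrt_le_sqrt hsq
  
end Stmt16Aux

open Stmt16Aux

set_option maxHeartbeats 4000000 in
theorem stmt16 (d l : ℕ) (γ : ℝ → EuclideanSpace ℝ (Fin d))
    (hiso : ∀ s ∈ Set.Icc (0:ℝ) 1, ∀ t ∈ Set.Icc (0:ℝ) 1, ‖γ s - γ t‖ = |s - t|)
    (hrange : ∀ t, ∀ _ : t ∈ Set.Icc (0:ℝ) 1, γ t ∈ openCube d)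
    (P : Set Lip1I) (hP : Dense P) (t₀ : ℝ) (ht₀ : t₀ ∈ Set.Ioo (0:ℝ) 1)
    (f : LipV d l) (K : NNReal) (hK : K < 1) (hfK : LipschitzWith K ⇑f.1)
    (ε : ℝ) (hε : ε ∈ Set.Ioo (0:ℝ) 1) (j : Fin l) :
    ∃ p ∈ P, ∃ η > 0, ∃ g : LipV d l,
      (∀ x : ↥(unitCube d), ‖g.1 x - f.1 x‖ ≤ ε) ∧
      (∀ t, ∀ ht : t ∈ Set.Icc (0:ℝ) 1, |t - t₀| < η →
        g.1 ⟨γ t, openCube_subset_unitCube d (hrange t ht)⟩ j = p.1 ⟨t, ht⟩) ∧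
      (l = 1 → ∀ t, ∀ ht : t ∈ Set.Icc (0:ℝ) 1,
        g.1 ⟨γ t, openCube_subset_unitCube d (hrange t ht)⟩ j = p.1 ⟨t, ht⟩) := by
  classical
  obtain ⟨ht₀0, ht₀1⟩ := ht₀
  obtain ⟨hε0, hε1⟩ := hε
  have hK1 : (K:ℝ) < 1 := hK
  have hKnn : (0:ℝ) ≤ K := K.coe_nonneg
  -- the direction vector
  set v : EuclideanSpace ℝ (Fin d) := γ 1 - γ 0 with hvdef
  have h01 : (0:ℝ) ∈ Set.Icc (0:ℝ) 1 := by constructor <;> norm_num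
  have h11 : (1:ℝ) ∈ Set.Icc (0:ℝ) 1 := by constructor <;> norm_num
  have hv : ‖v‖ = 1 := by
    have := hiso 1 h11 0 h01; simpa using this
  have haff : ∀ t ∈ Set.Icc (0:ℝ) 1, γ t = γ 0 + t • v := by
    intro t ht
    have hd01 : dist (γ 0) (γ 1) = 1 := by
      rw [dist_eq_norm, hiso 0 h01 1 h11]; norm_num
    have hxy : dist (γ 0) (γ t) = t * dist (γ 0) (γ 1) := by
      rw [hd01, dist_eq_norm, hiso 0 h01 t ht, mul_one, abs_of_nonpos (by linarith [ht.1])]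
      linarith
    have hyz : dist (γ t) (γ 1) = (1 - t) * dist (γ 0) (γ 1) := by
      rw [hd01, dist_eq_norm, hiso t ht 1 h11, mul_one, abs_of_nonpos (by linarith [ht.2])]
      linarith
    have := eq_lineMap_of_dist_eq_mul_of_dist_eq_mul hxy hyz
    rw [AffineMap.lineMap_apply_module] at this
    rw [this, hvdef]; module
  -- parameters
  obtain ⟨K₀, hK₀0, hK₀K, hK₀1, hK₀l1, hK₀lne⟩ :
      ∃ K₀ : ℝ, 0 ≤ K₀ ∧ K₀ ≤ (K:ℝ) ∧ K₀ ≤ 1 ∧ (l = 1 → K₀ = 0) ∧ (l ≠ 1 → K₀ = (K:ℝ)) := by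
    by_cases hl : l = 1
    · exact ⟨0, le_refl _, hKnn, by norm_num, fun _ => rfl, fun h => absurd hl h⟩
    · exact ⟨(K:ℝ), hKnn, le_refl _, le_of_lt hK1, fun h => absurd h hl, fun _ => rfl⟩
  obtain ⟨κ₃, hκdef, hκ0, hκ1, hκsq⟩ :
      ∃ κ₃ : ℝ, κ₃ = Real.sqrt (1 - K₀^2) ∧ 0 ≤ κ₃ ∧ κ₃ ≤ 1 ∧ κ₃^2 = 1 - K₀^2 := by
    refine ⟨Real.sqrt (1 - K₀^2), rfl, Real.sqrt_nonneg _, ?_, Real.sq_sqrt (by nlinarith)⟩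
    have h1 : Real.sqrt (1 - K₀^2) ≤ Real.sqrt 1 := Real.sqrt_le_sqrt (by nlinarith)
    simpa using h1
  obtain ⟨η, hη0, hηε, hηt₀, hηt₁⟩ :
      ∃ η : ℝ, 0 < η ∧ η ≤ ε/4 ∧ η ≤ t₀ ∧ η ≤ 1 - t₀ := by
    refine ⟨min (ε/4) (min t₀ (1 - t₀)),
      lt_min (by linarith) (lt_min (by linarith) (by linarith)), min_le_left _ _,
      (min_le_right _ _).trans (min_le_left _ _), (min_le_right _ _).trans (min_le_right _ _)⟩
  obtain ⟨δ', hδ'def⟩ : ∃ δ' : ℝ, δ' = ε/4 + η := ⟨_, rfl⟩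
  -- choose p
  set γc : ↥(Set.Icc (0:ℝ) 1) → ↥(unitCube d) :=
    fun t => ⟨γ t.1, openCube_subset_unitCube d (hrange t.1 t.2)⟩ with hγcdef
  have hγcdist : ∀ s t : ↥(Set.Icc (0:ℝ) 1), dist (γc s) (γc t) = dist s t := by
    intro s t
    rw [Subtype.dist_eq, Subtype.dist_eq, dist_eq_norm, Real.dist_eq]
    exact hiso s.1 s.2 t.1 t.2
  have hFlip : LipschitzWith 1 (fun t : ↥(Set.Icc (0:ℝ) 1) => f.1 (γc t) j) := by
    apply LipschitzWith.of_dist_le_mul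
    intro s t
    simp only [NNReal.coe_one, one_mul, Real.dist_eq]
    have h1 : |f.1 (γc s) j - f.1 (γc t) j| ≤ ‖f.1 (γc s) - f.1 (γc t)‖ := by
      have := abs_coord_le_norm (f.1 (γc s) - f.1 (γc t)) j
      simpa [PiLp.sub_apply] using this
    refine h1.trans ?_
    have h2 := f.2.dist_le_mul (γc s) (γc t)
    rw [NNReal.coe_one, one_mul, dist_eq_norm, hγcdist, Subtype.dist_eq, Real.dist_eq] at h2
    exact h2
  haveI : CompactSpace ↥(Set.Icc (0:ℝ) 1) := isCompact_iff_compactSpace.mp isCompact_Icc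
  set Fhat : Lip1I := ⟨BoundedContinuousFunction.mkOfCompact
      ⟨fun t => f.1 (γc t) j, hFlip.continuous⟩, hFlip⟩ with hFhatdef
  obtain ⟨p, hpP, hpdist⟩ := hP.exists_dist_lt Fhat (by linarith : (0:ℝ) < ε/4)
  have hpF : ∀ t : ↥(Set.Icc (0:ℝ) 1), |p.1 t - f.1 (γc t) j| ≤ ε/4 := by
    intro t
    have h1 : dist (p.1 t) (Fhat.1 t) ≤ dist p.1 Fhat.1 :=
      BoundedContinuousFunction.dist_coe_le_dist t
    have h2 : dist p Fhat = dist p.1 Fhat.1 := Subtype.dist_eq p Fhat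
    have h3 : Fhat.1 t = f.1 (γc t) j := rfl
    rw [h3, Real.dist_eq] at h1
    have h4 : dist p.1 Fhat.1 < ε/4 := by
      rw [← h2, dist_comm]
      exact hpdist
    linarith
  -- geometry
  set u : EuclideanSpace ℝ (Fin d) → ℝ := fun x => inner ℝ (x - γ 0) v with hudef
  have hu : ∀ t ∈ Set.Icc (0:ℝ) 1, u (γ t) = t := by
    intro t ht
    rw [hudef]
    simp only [haff t ht, add_sub_cancel_left]
    rw [real_inner_smul_left, real_inner_self_eq_norm_mul_norm, hv]
    ring
  have huLip : ∀ x y, |u x - u y| ≤ ‖x - y‖ := by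
    intro x y
    have h1 : u x - u y = inner ℝ (x - y) v := by
      rw [hudef]
      simp only
      rw [← inner_sub_left]
      congr 1
      abel
    rw [h1]
    have := abs_real_inner_le_norm (x - y) v
    simpa [hv] using this
  set w : EuclideanSpace ℝ (Fin d) → EuclideanSpace ℝ (Fin d) := fun x => x - (u x) • v
    with hwdef
  have hwγ : ∀ t ∈ Set.Icc (0:ℝ) 1, w (γ t) = γ 0 := by
    intro t ht
    show γ t - u (γ t) • v = γ 0
    rw [hu t ht, haff t ht]
    abel
  have hvinner : ∀ x y, inner ℝ v (w x - w y) = (0:ℝ) := by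
    intro x y
    have h1 : w x - w y = (x - y) - (u x - u y) • v := by rw [hwdef]; simp only; module
    rw [h1, inner_sub_right, real_inner_smul_right, real_inner_self_eq_norm_mul_norm, hv]
    have h2 : inner ℝ v (x - y) = u x - u y := by
      rw [real_inner_comm, hudef]
      simp only
      rw [← inner_sub_left]
      congr 1
      abel
    rw [h2]; ring
  have hsplit : ∀ x y, ‖x - y‖^2 = (u x - u y)^2 + ‖w x - w y‖^2 := by
    intro x y
    have hd : x - y = (u x - u y) • v + (w x - w y) := by rw [hwdef]; simp only; module
    rw [hd, norm_sq_split v _ hv (hvinner x y)]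
  -- scalar profile functions
  set q : ℝ → ℝ := fun t => max (-η) (min η (t - t₀)) with hqdef
  have hqabs : ∀ r, |q r| ≤ η := by
    intro r
    rw [abs_le]
    constructor
    · exact le_max_left _ _
    · exact max_le (by linarith) (min_le_left _ _)
  have hqsq : ∀ a b, (q a - q b)^2 ≤ (q a - q b) * (a - b) := fun a b =>
    q_sq η t₀ (le_of_lt hη0) a b
  set χ : ℝ → ℝ := fun t => t - q t with hχdef
  set Φ : ℝ → ℝ := fun t => κ₃ * (t - t₀) + (1 - κ₃) * q t with hΦdef
  have hkey : ∀ a b, K₀^2*(χ a - χ b)^2 + (Φ a - Φ b)^2 ≤ (a - b)^2 := by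
    intro a b
    have h1 : χ a - χ b = (a - b) - (q a - q b) := by rw [hχdef]; ring
    have h2 : Φ a - Φ b = κ₃ * (a - b) + (1 - κ₃) * (q a - q b) := by rw [hΦdef]; ring
    rw [h1, h2]
    exact key_ineq K₀ κ₃ (q a - q b) (a - b) hK₀0 hK₀1 hκdef (hqsq a b)
  have hχsq : ∀ a b, (χ a - χ b)^2 ≤ (a - b)^2 := by
    intro a b
    have h1 : χ a - χ b = (a - b) - (q a - q b) := by rw [hχdef]; ring
    rw [h1]
    exact chi_sq _ _ (hqsq a b)
  have hχmem : ∀ t ∈ Set.Icc (0:ℝ) 1, χ t ∈ Set.Icc (0:ℝ) 1 := by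
    intro t ht
    rw [hχdef]
    simp only
    rcases le_total t₀ t with hc | hc
    · have hq0 : 0 ≤ q t := le_max_of_le_right (le_min (le_of_lt hη0) (by linarith))
      have hq1 : q t ≤ t - t₀ := max_le (by linarith) (min_le_right _ _)
      constructor <;> [linarith [ht.1]; linarith [ht.2]]
    · have hq0 : q t ≤ 0 := max_le (by linarith) ((min_le_right _ _).trans (by linarith))
      have hq1 : t - t₀ ≤ q t := by
        show t - t₀ ≤ max (-η) (min η (t - t₀))
        rw [min_eq_right (by linarith : t - t₀ ≤ η)]
        exact le_max_right _ _
      constructor <;> [linarith [ht.1]; linarith [ht.2]]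
  -- the collapse map
  set ψ : EuclideanSpace ℝ (Fin d) → EuclideanSpace ℝ (Fin d) := fun z => z - (q (u z)) • v
    with hψdef
  have hψsplit : ∀ x y, ‖ψ x - ψ y‖^2 = (χ (u x) - χ (u y))^2 + ‖w x - w y‖^2 := by
    intro x y
    have hd : ψ x - ψ y = (χ (u x) - χ (u y)) • v + (w x - w y) := by
      show (x - (q (u x)) • v) - (y - (q (u y)) • v)
          = ((u x - q (u x)) - (u y - q (u y))) • v + ((x - u x • v) - (y - u y • v))
      module
    rw [hd, norm_sq_split v _ hv (hvinner x y)]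
  have hψx : ∀ z, ‖ψ z - z‖ ≤ η := by
    intro z
    have h1 : ψ z - z = -((q (u z)) • v) := by
      show (z - (q (u z)) • v) - z = -((q (u z)) • v)
      abel
    rw [h1, norm_neg, norm_smul, hv, mul_one, Real.norm_eq_abs]
    exact hqabs _
  -- coordinatewise clamp onto the cube
  set cc : EuclideanSpace ℝ (Fin d) → EuclideanSpace ℝ (Fin d) :=
    fun z => (WithLp.equiv 2 _).symm (fun i => max 0 (min 1 (z i))) with hccdef
  have hccmem : ∀ z, cc z ∈ unitCube d := by
    intro z i
    show max 0 (min 1 (z i)) ∈ Set.Icc (0:ℝ) 1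
    constructor
    · exact le_max_left _ _
    · exact max_le (by norm_num) (min_le_left _ _)
  have hccid : ∀ z ∈ unitCube d, cc z = z := by
    intro z hz
    show (WithLp.equiv 2 _).symm (fun i => max 0 (min 1 (z i))) = z
    rw [Equiv.symm_apply_eq]
    funext i
    show max 0 (min 1 (z i)) = z i
    rw [min_eq_right (hz i).2, max_eq_right (hz i).1]
  have hcclip : ∀ z₁ z₂, ‖cc z₁ - cc z₂‖ ≤ ‖z₁ - z₂‖ := by
    intro z₁ z₂
    have h2 : ‖cc z₁ - cc z₂‖^2 ≤ ‖z₁ - z₂‖^2 := by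
      rw [PiLp.norm_sq_eq_of_L2, PiLp.norm_sq_eq_of_L2]
      refine Finset.sum_le_sum fun i _ => ?_
      have he : (cc z₁ - cc z₂) i = max 0 (min 1 (z₁ i)) - max 0 (min 1 (z₂ i)) := by
        simp [hccdef, PiLp.sub_apply, WithLp.equiv_symm_apply, PiLp.toLp_apply]
      rw [he, PiLp.sub_apply, Real.norm_eq_abs, Real.norm_eq_abs]
      have := clamp_lip 0 1 (z₁ i) (z₂ i)
      exact pow_le_pow_left₀ (abs_nonneg _) this 2
    exact (pow_le_pow_iff_left₀ (norm_nonneg _) (norm_nonneg _) (by norm_num)).mp h2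
  set ψt : EuclideanSpace ℝ (Fin d) → EuclideanSpace ℝ (Fin d) := fun z => cc (ψ z) with hψtdef
  have hψtmem : ∀ z, ψt z ∈ unitCube d := fun z => hccmem (ψ z)
  have hψtγ : ∀ t ∈ Set.Icc (0:ℝ) 1, ψt (γ t) = γ (χ t) := by
    intro t ht
    have h1 : ψ (γ t) = γ (χ t) := by
      show γ t - (q (u (γ t))) • v = γ (χ t)
      rw [hu t ht, haff t ht, haff (χ t) (hχmem t ht)]
      show γ 0 + t • v - q t • v = γ 0 + (t - q t) • v
      module
    show cc (ψ (γ t)) = γ (χ t)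
    rw [h1]
    exact hccid _ (openCube_subset_unitCube d (hrange (χ t) (hχmem t ht)))
  -- the auxiliary embedding T
  set T : EuclideanSpace ℝ (Fin d) → EuclideanSpace ℝ (Fin (d+1)) :=
    fun z => (WithLp.equiv 2 _).symm
      (Fin.cons (Φ (u z)) (fun i => κ₃ * ((w z) i - (γ 0) i))) with hTdef
  have hTsq : ∀ x y, ‖T x - T y‖^2 = (Φ (u x) - Φ (u y))^2 + κ₃^2 * ‖w x - w y‖^2 := by
    intro x y
    rw [PiLp.norm_sq_eq_of_L2]
    have happ : ∀ i : Fin (d+1), (T x - T y) i =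
        (Fin.cons (Φ (u x)) (fun i => κ₃ * ((w x) i - (γ 0) i)) : Fin (d+1) → ℝ) i
        - (Fin.cons (Φ (u y)) (fun i => κ₃ * ((w y) i - (γ 0) i)) : Fin (d+1) → ℝ) i := by
      intro i
      simp [hTdef, PiLp.sub_apply, WithLp.equiv_symm_apply, PiLp.toLp_apply]
    rw [Fin.sum_univ_succ]
    rw [happ 0]
    simp only [Fin.cons_zero]
    congr 1
    · rw [Real.norm_eq_abs, sq_abs]
    · have : ∀ i : Fin d, ‖(T x - T y) i.succ‖^2 = κ₃^2 * ‖(w x - w y) i‖^2 := by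
        intro i
        rw [happ i.succ]
        simp only [Fin.cons_succ]
        rw [PiLp.sub_apply (x := w x) (y := w y), Real.norm_eq_abs, sq_abs, Real.norm_eq_abs, sq_abs]
        ring
      rw [Finset.sum_congr rfl (fun i _ => this i), ← Finset.mul_sum]
      congr 1
      rw [PiLp.norm_sq_eq_of_L2]
  have hTlip : ∀ x y, ‖T x - T y‖^2 + K₀^2 * ‖ψ x - ψ y‖^2 ≤ ‖x - y‖^2 := by
    intro x y
    rw [hTsq x y, hψsplit x y, hsplit x y]
    exact tlip_arith K₀ κ₃ _ _ _ _ hκsq (hkey (u x) (u y)) (by positivity)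
  have hTγ : ∀ s ∈ Set.Icc (0:ℝ) 1, ∀ t ∈ Set.Icc (0:ℝ) 1,
      ‖T (γ s) - T (γ t)‖ = |Φ s - Φ t| := by
    intro s hs t ht
    have h1 : ‖T (γ s) - T (γ t)‖^2 = (Φ s - Φ t)^2 := by
      rw [hTsq, hu s hs, hu t ht, hwγ s hs, hwγ t ht]
      simp
    calc ‖T (γ s) - T (γ t)‖ = Real.sqrt (‖T (γ s) - T (γ t)‖^2) :=
          (Real.sqrt_sq (norm_nonneg _)).symm
      _ = |Φ s - Φ t| := by rw [h1, Real.sqrt_sq_eq_abs]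
  -- the window
  obtain ⟨a₀, b₀, hWsub, ht₀W, hqW, hl1W, hlneW⟩ :
      ∃ a₀ b₀ : ℝ, Set.Icc a₀ b₀ ⊆ Set.Icc (0:ℝ) 1 ∧ t₀ ∈ Set.Icc a₀ b₀ ∧
        (∀ t ∈ Set.Icc a₀ b₀, (l = 1 → Φ t - Φ t₀ = t - t₀) ∧ (l ≠ 1 → q t = t - t₀)) ∧
        (l = 1 → Set.Icc a₀ b₀ = Set.Icc (0:ℝ) 1) ∧
        (l ≠ 1 → Set.Icc a₀ b₀ = Set.Icc (t₀ - η) (t₀ + η)) := by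
    by_cases hl : l = 1
    · refine ⟨0, 1, le_refl _, ⟨le_of_lt ht₀0, le_of_lt ht₀1⟩, ?_, fun _ => rfl,
        fun h => absurd hl h⟩
      intro t _
      refine ⟨fun _ => ?_, fun h => absurd hl h⟩
      have hκ : κ₃ = 1 := by
        rw [hκdef, hK₀l1 hl]
        simp
      rw [hΦdef]
      simp only [hκ]
      ring
    · refine ⟨t₀ - η, t₀ + η, ?_, ⟨by linarith, by linarith⟩, ?_, fun h => absurd h hl,
        fun _ => rfl⟩
      · intro t htW
        exact ⟨by linarith [htW.1], by linarith [htW.2]⟩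
      · intro t htW
        refine ⟨fun h => absurd h hl, fun _ => ?_⟩
        rw [hqdef]
        simp only
        rw [min_eq_right (by linarith [htW.2]), max_eq_right (by linarith [htW.1])]
  have hΦW : ∀ s ∈ Set.Icc a₀ b₀, ∀ t ∈ Set.Icc a₀ b₀, Φ t - Φ s = t - s := by
    intro s hs t ht
    by_cases hl : l = 1
    · have h1 := ((hqW t ht).1 hl)
      have h2 := ((hqW s hs).1 hl)
      linarith
    · have h1 := ((hqW t ht).2 hl)
      have h2 := ((hqW s hs).2 hl)
      rw [hΦdef]
      simp only [h1, h2]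
      ring
  haveI hWne : Nonempty ↥(Set.Icc a₀ b₀) := ⟨⟨t₀, ht₀W⟩⟩
  -- the inf-convolution
  set hraw : EuclideanSpace ℝ (Fin d) → ℝ :=
    fun z => ⨅ s : ↥(Set.Icc a₀ b₀), (p.1 ⟨s.1, hWsub s.2⟩ + ‖T z - T (γ s.1)‖) with hrawdef
  have hbdd : ∀ z, BddBelow (Set.range
      fun s : ↥(Set.Icc a₀ b₀) => (p.1 ⟨s.1, hWsub s.2⟩ + ‖T z - T (γ s.1)‖)) := by
    intro z
    refine ⟨-‖p.1‖, ?_⟩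
    rintro r ⟨s, rfl⟩
    have h1 : |p.1 ⟨s.1, hWsub s.2⟩| ≤ ‖p.1‖ := by
      have := p.1.norm_coe_le_norm ⟨s.1, hWsub s.2⟩
      simpa [Real.norm_eq_abs] using this
    have h2 := (abs_le.mp h1).1
    have h3 : (0:ℝ) ≤ ‖T z - T (γ s.1)‖ := norm_nonneg _
    show -‖p.1‖ ≤ p.1 ⟨s.1, hWsub s.2⟩ + ‖T z - T (γ s.1)‖
    linarith
  have hrawLip : ∀ x y, |hraw x - hraw y| ≤ ‖T x - T y‖ := by
    have key : ∀ x y, hraw x ≤ hraw y + ‖T x - T y‖ := by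
      intro x y
      have h1 : ∀ s : ↥(Set.Icc a₀ b₀),
          hraw x - ‖T x - T y‖ ≤ p.1 ⟨s.1, hWsub s.2⟩ + ‖T y - T (γ s.1)‖ := by
        intro s
        have h2 : hraw x ≤ p.1 ⟨s.1, hWsub s.2⟩ + ‖T x - T (γ s.1)‖ := ciInf_le (hbdd x) s
        have h3 : ‖T x - T (γ s.1)‖ ≤ ‖T x - T y‖ + ‖T y - T (γ s.1)‖ :=
          norm_sub_le_norm_sub_add_norm_sub _ _ _
        linarith
      have h4 : hraw x - ‖T x - T y‖ ≤ hraw y := le_ciInf h1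
      linarith
    intro x y
    rw [abs_le]
    constructor
    · have := key y x
      rw [norm_sub_rev] at this
      linarith
    · linarith [key x y]
  have hrawγ : ∀ t, ∀ htW : t ∈ Set.Icc a₀ b₀, hraw (γ t) = p.1 ⟨t, hWsub htW⟩ := by
    intro t htW
    refine le_antisymm ?_ ?_
    · have h1 : hraw (γ t) ≤ p.1 ⟨t, hWsub htW⟩ + ‖T (γ t) - T (γ t)‖ :=
        ciInf_le (hbdd (γ t)) ⟨t, htW⟩
      simpa using h1
    · refine le_ciInf fun s => ?_
      have h1 : ‖T (γ t) - T (γ s.1)‖ = |Φ t - Φ s.1| :=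
        hTγ t (hWsub htW) s.1 (hWsub s.2)
      have h2 : |Φ t - Φ s.1| = |t - s.1| := by rw [hΦW s.1 s.2 t htW]
      have h3 : |p.1 ⟨t, hWsub htW⟩ - p.1 ⟨s.1, hWsub s.2⟩| ≤ |t - s.1| := by
        have h4 := p.2.dist_le_mul ⟨t, hWsub htW⟩ ⟨s.1, hWsub s.2⟩
        rw [NNReal.coe_one, one_mul, Real.dist_eq, Subtype.dist_eq, Real.dist_eq] at h4
        exact h4
      rw [h1, h2]
      have := abs_le.mp h3
      linarith [this.1]
  -- the band clamp
  set B : EuclideanSpace ℝ (Fin d) → ℝ := fun z => f.1 ⟨ψt z, hψtmem z⟩ j with hBdef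
  set h : EuclideanSpace ℝ (Fin d) → ℝ :=
    fun z => max (B z - δ') (min (B z + δ') (hraw z)) with hhdef
  have hhB : ∀ z, |h z - B z| ≤ δ' := by
    intro z
    have hδ'0 : 0 ≤ δ' := by rw [hδ'def]; linarith
    rw [abs_le]
    constructor
    · have : B z - δ' ≤ h z := le_max_left _ _
      linarith
    · have h1 : h z ≤ max (B z - δ') (B z + δ') :=
        max_le_max le_rfl (min_le_left _ _)
      rw [max_eq_right (by linarith)] at h1
      linarith
  have hhLip : ∀ x y, |h x - h y| ≤ max (|B x - B y|) (‖T x - T y‖) := by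
    intro x y
    have h1 := clamp3_lip (B x - δ') (B y - δ') (B x + δ') (B y + δ') (hraw x) (hraw y)
      (by simp)
    have h2 : B x + δ' - (B y + δ') = B x - B y := by ring
    rw [h2] at h1
    refine h1.trans ?_
    exact max_le_max le_rfl (hrawLip x y)
  -- the candidate function
  set g₀ : ↥(unitCube d) → EuclideanSpace ℝ (Fin l) :=
    fun x => (WithLp.equiv 2 _).symm
      (fun i => if i = j then h x.1 else f.1 ⟨ψt x.1, hψtmem x.1⟩ i) with hg₀def
  have hg₀app : ∀ (x : ↥(unitCube d)) (i : Fin l),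
      (g₀ x) i = if i = j then h x.1 else f.1 ⟨ψt x.1, hψtmem x.1⟩ i := by
    intro x i
    simp [hg₀def, WithLp.equiv_symm_apply, PiLp.toLp_apply]
  have hfnorm : ∀ A C : ↥(unitCube d), ∑ i, (f.1 A i - f.1 C i)^2 = ‖f.1 A - f.1 C‖^2 := by
    intro A C
    rw [PiLp.norm_sq_eq_of_L2]
    exact Finset.sum_congr rfl fun i _ => by rw [PiLp.sub_apply, Real.norm_eq_abs, sq_abs]
  have hfK' : ∀ A C : ↥(unitCube d), ‖f.1 A - f.1 C‖ ≤ (K:ℝ) * ‖A.1 - C.1‖ := by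
    intro A C
    have h2 := hfK.dist_le_mul A C
    rwa [dist_eq_norm, Subtype.dist_eq, dist_eq_norm] at h2
  have hsumsq : ∀ x y : ↥(unitCube d), ‖g₀ x - g₀ y‖^2 =
      (∑ i ∈ Finset.univ.erase j,
        (f.1 ⟨ψt x.1, hψtmem x.1⟩ i - f.1 ⟨ψt y.1, hψtmem y.1⟩ i)^2) + (h x.1 - h y.1)^2 := by
    intro x y
    rw [PiLp.norm_sq_eq_of_L2]
    rw [← Finset.sum_erase_add _ _ (Finset.mem_univ j)]
    congr 1
    · refine Finset.sum_congr rfl fun i hi => ?_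
      have hij : i ≠ j := Finset.ne_of_mem_erase hi
      rw [PiLp.sub_apply, hg₀app x i, hg₀app y i]
      simp only [if_neg hij]
      rw [Real.norm_eq_abs, sq_abs]
    · rw [PiLp.sub_apply, hg₀app x j, hg₀app y j]
      simp only [if_pos]
      rw [Real.norm_eq_abs, sq_abs]
  have herase : ∀ x y : ↥(unitCube d),
      (∑ i ∈ Finset.univ.erase j,
        (f.1 ⟨ψt x.1, hψtmem x.1⟩ i - f.1 ⟨ψt y.1, hψtmem y.1⟩ i)^2)
        ≤ K₀^2 * ‖ψ x.1 - ψ y.1‖^2 := by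
    intro x y
    by_cases hl : l = 1
    · have hempty : Finset.univ.erase j = ∅ := by
        rw [Finset.eq_empty_iff_forall_notMem]
        intro i hi
        exact (Finset.ne_of_mem_erase hi) (by subst hl; exact Subsingleton.elim i j)
      rw [hempty]
      simp only [Finset.sum_empty]
      positivity
    · have h1 := Finset.sum_le_sum_of_subset_of_nonneg
        (Finset.subset_univ (Finset.univ.erase j))
        (fun i _ _ => sq_nonneg (f.1 ⟨ψt x.1, hψtmem x.1⟩ i - f.1 ⟨ψt y.1, hψtmem y.1⟩ i))
      refine h1.trans ?_
      rw [hfnorm]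
      have h3 : ‖f.1 ⟨ψt x.1, hψtmem x.1⟩ - f.1 ⟨ψt y.1, hψtmem y.1⟩‖
          ≤ K₀ * ‖ψ x.1 - ψ y.1‖ := by
        refine (hfK' _ _).trans ?_
        rw [hK₀lne hl]
        exact mul_le_mul_of_nonneg_left (hcclip _ _) hKnn
      calc ‖f.1 ⟨ψt x.1, hψtmem x.1⟩ - f.1 ⟨ψt y.1, hψtmem y.1⟩‖^2
          ≤ (K₀ * ‖ψ x.1 - ψ y.1‖)^2 := pow_le_pow_left₀ (norm_nonneg _) h3 2
        _ = K₀^2 * ‖ψ x.1 - ψ y.1‖^2 := by ring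
  have hmainsq : ∀ x y : ↥(unitCube d), ‖g₀ x - g₀ y‖^2 ≤ ‖x.1 - y.1‖^2 := by
    intro x y
    rw [hsumsq x y]
    have hh := hhLip x.1 y.1
    rcases le_total (|B x.1 - B y.1|) (‖T x.1 - T y.1‖) with hc | hc
    · -- case A
      rw [max_eq_right hc] at hh
      have h1 : (h x.1 - h y.1)^2 ≤ ‖T x.1 - T y.1‖^2 := by
        rw [← sq_abs (h x.1 - h y.1)]
        exact pow_le_pow_left₀ (abs_nonneg _) hh 2
      have h2 := herase x y
      have h3 := hTlip x.1 y.1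
      have h4 := hsplit x.1 y.1
      linarith
    · -- case B
      rw [max_eq_left hc] at hh
      have h1 : (h x.1 - h y.1)^2 ≤ (B x.1 - B y.1)^2 := by
        rw [← sq_abs (h x.1 - h y.1), ← sq_abs (B x.1 - B y.1)]
        exact pow_le_pow_left₀ (abs_nonneg _) hh 2
      have hBj : B x.1 - B y.1 = f.1 ⟨ψt x.1, hψtmem x.1⟩ j - f.1 ⟨ψt y.1, hψtmem y.1⟩ j := rfl
      have h2 : (∑ i ∈ Finset.univ.erase j,
          (f.1 ⟨ψt x.1, hψtmem x.1⟩ i - f.1 ⟨ψt y.1, hψtmem y.1⟩ i)^2) + (B x.1 - B y.1)^2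
          = ‖f.1 ⟨ψt x.1, hψtmem x.1⟩ - f.1 ⟨ψt y.1, hψtmem y.1⟩‖^2 := by
        rw [hBj, ← hfnorm]
        exact Finset.sum_erase_add _ _ (Finset.mem_univ j)
      have h3 : ‖f.1 ⟨ψt x.1, hψtmem x.1⟩ - f.1 ⟨ψt y.1, hψtmem y.1⟩‖ ≤ ‖ψ x.1 - ψ y.1‖ := by
        refine (hfK' _ _).trans ?_
        calc (K:ℝ) * ‖(⟨ψt x.1, hψtmem x.1⟩ : ↥(unitCube d)).1 - (⟨ψt y.1, hψtmem y.1⟩ : ↥(unitCube d)).1‖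
            ≤ 1 * ‖ψt x.1 - ψt y.1‖ := by
              exact mul_le_mul (le_of_lt hK1) le_rfl (norm_nonneg _) (by norm_num)
          _ = ‖ψt x.1 - ψt y.1‖ := one_mul _
          _ ≤ ‖ψ x.1 - ψ y.1‖ := hcclip _ _
      have h4 : ‖f.1 ⟨ψt x.1, hψtmem x.1⟩ - f.1 ⟨ψt y.1, hψtmem y.1⟩‖^2 ≤ ‖ψ x.1 - ψ y.1‖^2 :=
        pow_le_pow_left₀ (norm_nonneg _) h3 2
      have h5 := hψsplit x.1 y.1
      have h6 := hχsq (u x.1) (u y.1)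
      have h7 := hsplit x.1 y.1
      linarith
  have hglip : LipschitzWith 1 g₀ := by
    apply LipschitzWith.of_dist_le_mul
    intro x y
    rw [NNReal.coe_one, one_mul, dist_eq_norm, Subtype.dist_eq, dist_eq_norm]
    exact (pow_le_pow_iff_left₀ (norm_nonneg _) (norm_nonneg _) (by norm_num)).mp (hmainsq x y)
  -- closeness to f
  have hclose : ∀ x : ↥(unitCube d), ‖g₀ x - f.1 x‖ ≤ ε := by
    intro x
    have hsq : ‖g₀ x - f.1 x‖^2 =
        (∑ i ∈ Finset.univ.erase j, (f.1 ⟨ψt x.1, hψtmem x.1⟩ i - f.1 x i)^2)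
          + (h x.1 - f.1 x j)^2 := by
      rw [PiLp.norm_sq_eq_of_L2]
      rw [← Finset.sum_erase_add _ _ (Finset.mem_univ j)]
      congr 1
      · refine Finset.sum_congr rfl fun i hi => ?_
        have hij : i ≠ j := Finset.ne_of_mem_erase hi
        rw [PiLp.sub_apply, hg₀app x i]
        simp only [if_neg hij]
        rw [Real.norm_eq_abs, sq_abs]
      · rw [PiLp.sub_apply, hg₀app x j]
        simp only [if_pos]
        rw [Real.norm_eq_abs, sq_abs]
    have hψxd : ‖ψt x.1 - x.1‖ ≤ η := by
      have h1 : cc x.1 = x.1 := hccid x.1 x.2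
      calc ‖ψt x.1 - x.1‖ = ‖cc (ψ x.1) - cc x.1‖ := by rw [h1]
        _ ≤ ‖ψ x.1 - x.1‖ := hcclip _ _
        _ ≤ η := hψx x.1
    have hfd : ‖f.1 ⟨ψt x.1, hψtmem x.1⟩ - f.1 x‖ ≤ (K:ℝ) * η := by
      refine (hfK' _ _).trans ?_
      exact mul_le_mul_of_nonneg_left hψxd hKnn
    have hKη : (K:ℝ) * η ≤ η := by nlinarith
    have hBfx : |B x.1 - f.1 x j| ≤ (K:ℝ) * η := by
      have h1 : B x.1 - f.1 x j = (f.1 ⟨ψt x.1, hψtmem x.1⟩ - f.1 x) j := by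
        rw [PiLp.sub_apply]
      rw [h1]
      exact (abs_coord_le_norm _ j).trans hfd
    have hhfx : |h x.1 - f.1 x j| ≤ δ' + (K:ℝ) * η := by
      calc |h x.1 - f.1 x j| ≤ |h x.1 - B x.1| + |B x.1 - f.1 x j| := abs_sub_le _ _ _
        _ ≤ δ' + (K:ℝ) * η := add_le_add (hhB x.1) hBfx
    have he1 : (∑ i ∈ Finset.univ.erase j, (f.1 ⟨ψt x.1, hψtmem x.1⟩ i - f.1 x i)^2)
        ≤ ((K:ℝ) * η)^2 := by
      have h1 := Finset.sum_le_sum_of_subset_of_nonneg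
        (Finset.subset_univ (Finset.univ.erase j))
        (fun i _ _ => sq_nonneg (f.1 ⟨ψt x.1, hψtmem x.1⟩ i - f.1 x i))
      refine h1.trans ?_
      rw [hfnorm]
      exact pow_le_pow_left₀ (norm_nonneg _) hfd 2
    have he2 : (h x.1 - f.1 x j)^2 ≤ (δ' + (K:ℝ) * η)^2 := by
      rw [← sq_abs (h x.1 - f.1 x j)]
      exact pow_le_pow_left₀ (abs_nonneg _) hhfx 2
    have hfin : ‖g₀ x - f.1 x‖^2 ≤ ε^2 := by
      rw [hsq]
      have hb1 : (K:ℝ) * η ≤ ε/4 := hKη.trans hηε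
      have hb2 : δ' + (K:ℝ) * η ≤ 3*ε/4 := by rw [hδ'def]; linarith
      have := close_arith ((K:ℝ)*η) (δ' + (K:ℝ)*η) ε (by positivity) hb1
        (by rw [hδ'def]; positivity) hb2 (le_of_lt hε0)
      nlinarith [he1, he2]
    calc ‖g₀ x - f.1 x‖ = Real.sqrt (‖g₀ x - f.1 x‖^2) := (Real.sqrt_sq (norm_nonneg _)).symm
      _ ≤ Real.sqrt (ε^2) := Real.sqrt_le_sqrt hfin
      _ = ε := Real.sqrt_sq (le_of_lt hε0)
  -- the value along γ on the window
  have hmain : ∀ t, ∀ ht : t ∈ Set.Icc (0:ℝ) 1, t ∈ Set.Icc a₀ b₀ →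
      h (γ t) = p.1 ⟨t, ht⟩ := by
    intro t ht htW
    have hr : hraw (γ t) = p.1 ⟨t, ht⟩ := hrawγ t htW
    have hsub : (⟨ψt (γ t), hψtmem (γ t)⟩ : ↥(unitCube d))
        = ⟨γ (χ t), openCube_subset_unitCube d (hrange (χ t) (hχmem t ht))⟩ :=
      Subtype.ext (hψtγ t ht)
    have hBγ : B (γ t) = f.1 ⟨γ (χ t), openCube_subset_unitCube d (hrange (χ t) (hχmem t ht))⟩ j := by
      show f.1 ⟨ψt (γ t), hψtmem (γ t)⟩ j = _
      rw [hsub]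
    have hχd : |t - χ t| ≤ η := by
      have h1 : t - χ t = q t := by rw [hχdef]; ring
      rw [h1]
      exact hqabs t
    have h2 : |f.1 (γc ⟨t, ht⟩) j
        - f.1 ⟨γ (χ t), openCube_subset_unitCube d (hrange (χ t) (hχmem t ht))⟩ j|
        ≤ (K:ℝ) * η := by
      have h3 : |f.1 (γc ⟨t, ht⟩) j
          - f.1 ⟨γ (χ t), openCube_subset_unitCube d (hrange (χ t) (hχmem t ht))⟩ j|
          ≤ ‖f.1 (γc ⟨t, ht⟩)
            - f.1 ⟨γ (χ t), openCube_subset_unitCube d (hrange (χ t) (hχmem t ht))⟩‖ := by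
        have := abs_coord_le_norm (f.1 (γc ⟨t, ht⟩)
          - f.1 ⟨γ (χ t), openCube_subset_unitCube d (hrange (χ t) (hχmem t ht))⟩) j
        simpa [PiLp.sub_apply] using this
      refine h3.trans ?_
      refine (hfK' _ _).trans ?_
      have h4 : ‖γ t - γ (χ t)‖ = |t - χ t| := hiso t ht (χ t) (hχmem t ht)
      have h5 : ‖(γc ⟨t, ht⟩).1
          - (⟨γ (χ t), openCube_subset_unitCube d (hrange (χ t) (hχmem t ht))⟩
            : ↥(unitCube d)).1‖ = |t - χ t| := h4
      rw [h5]
      exact mul_le_mul_of_nonneg_left hχd hKnn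
    have hdist : |p.1 ⟨t, ht⟩ - B (γ t)| ≤ δ' := by
      have h1 := hpF ⟨t, ht⟩
      have hKη : (K:ℝ) * η ≤ η := by nlinarith
      calc |p.1 ⟨t, ht⟩ - B (γ t)|
          ≤ |p.1 ⟨t, ht⟩ - f.1 (γc ⟨t, ht⟩) j| + |f.1 (γc ⟨t, ht⟩) j - B (γ t)| :=
            abs_sub_le _ _ _
        _ ≤ ε/4 + (K:ℝ) * η := by
            refine add_le_add h1 ?_
            rw [hBγ]
            exact h2
        _ ≤ δ' := by rw [hδ'def]; linarith
    have hb := abs_le.mp hdist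
    show max (B (γ t) - δ') (min (B (γ t) + δ') (hraw (γ t))) = p.1 ⟨t, ht⟩
    rw [hr]
    exact clamp_eq_self _ _ _ (by linarith [hb.2]) (by linarith [hb.1])
  -- assemble
  haveI : CompactSpace ↥(unitCube d) := isCompact_iff_compactSpace.mp (unitCube_compact d)
  refine ⟨p, hpP, η, hη0,
    ⟨BoundedContinuousFunction.mkOfCompact ⟨g₀, hglip.continuous⟩, hglip⟩, ?_, ?_, ?_⟩
  · intro x
    exact hclose x
  · intro t ht hlt
    have htW : t ∈ Set.Icc a₀ b₀ := by
      by_cases hl : l = 1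
      · rw [hl1W hl]; exact ht
      · rw [hlneW hl]
        have := abs_lt.mp hlt
        exact ⟨by linarith [this.1], by linarith [this.2]⟩
    have h1 : (g₀ ⟨γ t, openCube_subset_unitCube d (hrange t ht)⟩) j = h (γ t) := by
      rw [hg₀app]
      simp only [if_pos]
    calc (BoundedContinuousFunction.mkOfCompact ⟨g₀, hglip.continuous⟩ : _ →ᵇ _)
          ⟨γ t, openCube_subset_unitCube d (hrange t ht)⟩ j
        = (g₀ ⟨γ t, openCube_subset_unitCube d (hrange t ht)⟩) j := rfl
      _ = h (γ t) := h1
      _ = p.1 ⟨t, ht⟩ := hmain t ht htW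
  · intro hl t ht
    have htW : t ∈ Set.Icc a₀ b₀ := by rw [hl1W hl]; exact ht
    have h1 : (g₀ ⟨γ t, openCube_subset_unitCube d (hrange t ht)⟩) j = h (γ t) := by
      rw [hg₀app]
      simp only [if_pos]
    calc (BoundedContinuousFunction.mkOfCompact ⟨g₀, hglip.continuous⟩ : _ →ᵇ _)
          ⟨γ t, openCube_subset_unitCube d (hrange t ht)⟩ j
        = (g₀ ⟨γ t, openCube_subset_unitCube d (hrange t ht)⟩) j := rfl
      _ = h (γ t) := h1
      _ = p.1 ⟨t, ht⟩ := hmain t ht htW
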